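/- Define $f : \mathbb{R} \to \mathbb{P}$ into the Niemytzki plane by $f(x) = (x,0)$. Then $f$ is a pointwise limit of continuous maps $f_n(x) = (x, 1/n)$ from $\mathbb{R}$ to $\mathbb{P}$, but $f$ is not $F_\sigma$-measurable: the set $F = \{(r,0) : r \in \mathbb{Q}\}$ is closed in $\mathbb{P}$ while $f^{-1}(F) = \mathbb{Q}$ is not a $G_\delta$-set in $\mathbb{R}$. -/

import Mathlib

open Filter Topology Set

/-- The carrier of the Niemytzki plane: the closed upper half-plane. -/
def Niemytzki : Type := { p : ℝ × ℝ // 0 ≤ p.2 }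

/-- Euclidean open ball in the plane. -/
def euclBall (c : ℝ × ℝ) (r : ℝ) : Set (ℝ × ℝ) :=
  { p | (p.1 - c.1) ^ 2 + (p.2 - c.2) ^ 2 < r ^ 2 }

/-- The Niemytzki (tangent disc) topology: interior points have Euclidean ball
neighborhoods, boundary points `(x,0)` have neighborhoods consisting of the point
together with an open ball tangent to the axis at `(x,0)`. -/
instance : TopologicalSpace Niemytzki :=
  TopologicalSpace.generateFrom
    ({ S | ∃ x y r : ℝ, 0 < y ∧ 0 < r ∧ r ≤ y ∧
        S = { p : Niemytzki | p.val ∈ euclBall (x, y) r } } ∪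
     { S | ∃ x r : ℝ, 0 < r ∧
        S = insert ⟨(x, 0), le_refl 0⟩ { p : Niemytzki | p.val ∈ euclBall (x, r) r } })

/-- The generating family of the Niemytzki topology. -/
def niemGens : Set (Set Niemytzki) :=
  ({ S | ∃ x y r : ℝ, 0 < y ∧ 0 < r ∧ r ≤ y ∧
        S = { p : Niemytzki | p.val ∈ euclBall (x, y) r } } ∪
     { S | ∃ x r : ℝ, 0 < r ∧
        S = insert ⟨(x, 0), le_refl 0⟩ { p : Niemytzki | p.val ∈ euclBall (x, r) r } })

lemma niem_topo_eq :
    (inferInstance : TopologicalSpace Niemytzki) = TopologicalSpace.generateFrom niemGens := rfl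

lemma niem_gen_open {S : Set Niemytzki} (hS : S ∈ niemGens) : IsOpen S := by
  exact TopologicalSpace.isOpen_generateFrom_of_mem (g := niemGens) hS

/-- ℚ is not a Gδ subset of ℝ. -/
lemma rat_not_isGδ : ¬ IsGδ (Set.range ((↑) : ℚ → ℝ)) := by
  intro h
  have hd : Dense (Set.range ((↑) : ℚ → ℝ)) := Rat.denseRange_cast
  have h1 : Set.range ((↑) : ℚ → ℝ) ∈ residual ℝ := residual_of_dense_Gδ h hd
  have h2 : { x : ℝ | Irrational x } ∈ residual ℝ :=
    residual_of_dense_Gδ .setOf_irrational dense_irrational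
  have h3 : Dense (Set.range ((↑) : ℚ → ℝ) ∩ { x : ℝ | Irrational x }) :=
    dense_of_mem_residual (inter_mem h1 h2)
  obtain ⟨x, hx1, hx2⟩ := h3.nonempty
  exact hx2 hx1

theorem niemytzki_baire_one_not_Fsigma_measurable
    (f : ℝ → Niemytzki) (hf : ∀ x, f x = ⟨(x, 0), le_refl 0⟩)
    (g : ℕ → ℝ → Niemytzki)
    (hg : ∀ n x, g n x = ⟨(x, 1 / (n + 1)), by positivity⟩) :
    (∀ n, Continuous (g n)) ∧
    (∀ x, Tendsto (fun n => g n x) atTop (𝓝 (f x))) ∧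
    IsClosed { p : Niemytzki | p.val.2 = 0 ∧ ∃ q : ℚ, p.val.1 = (q : ℝ) } ∧
    f ⁻¹' { p : Niemytzki | p.val.2 = 0 ∧ ∃ q : ℚ, p.val.1 = (q : ℝ) }
      = Set.range ((↑) : ℚ → ℝ) ∧
    ¬ IsGδ (Set.range ((↑) : ℚ → ℝ)) := by
  refine ⟨?_, ?_, ?_, ?_, rat_not_isGδ⟩
  · -- continuity of g n
    intro n
    refine continuous_generateFrom_iff.mpr ?_
    rintro S (⟨cx, cy, r, hy, hr, hry, rfl⟩ | ⟨cx, r, hr, rfl⟩)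
    · have : (g n) ⁻¹' { p : Niemytzki | p.val ∈ euclBall (cx, cy) r }
          = { x : ℝ | (x - cx) ^ 2 + (1 / (n + 1) - cy) ^ 2 < r ^ 2 } := by
        ext x
        simp [hg n x, euclBall]
      rw [this]
      exact isOpen_lt (by fun_prop) continuous_const
    · have hne : (1 : ℝ) / (n + 1) ≠ 0 := by positivity
      have : (g n) ⁻¹' (insert ⟨(cx, 0), le_refl 0⟩
            { p : Niemytzki | p.val ∈ euclBall (cx, r) r })
          = { x : ℝ | (x - cx) ^ 2 + (1 / (n + 1) - r) ^ 2 < r ^ 2 } := by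
        ext x
        simp only [Set.mem_preimage, Set.mem_insert_iff, hg n x, euclBall, Set.mem_setOf_eq]
        constructor
        · rintro (h | h)
          · exact absurd (congrArg (fun p => p.val.2) h) hne
          · exact h
        · exact fun h => Or.inr h
      rw [this]
      exact isOpen_lt (by fun_prop) continuous_const
  · -- pointwise convergence
    intro x
    rw [hf x]
    refine TopologicalSpace.tendsto_nhds_generateFrom_iff.mpr ?_
    rintro S (⟨cx, cy, r, hy, hr, hry, rfl⟩ | ⟨cx, r, hr, rfl⟩) hx
    · exfalso
      simp only [euclBall, Set.mem_setOf_eq] at hx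
      change (x - cx) ^ 2 + ((0:ℝ) - cy) ^ 2 < r ^ 2 at hx
      nlinarith [sq_nonneg (x - cx)]
    · have hxc : x = cx := by
        rcases hx with h | h
        · exact congrArg (fun p => p.val.1) h
        · exfalso
          simp only [euclBall, Set.mem_setOf_eq] at h
          change (x - cx) ^ 2 + ((0:ℝ) - r) ^ 2 < r ^ 2 at h
          nlinarith [sq_nonneg (x - cx)]
      subst hxc
      have htend : Tendsto (fun n : ℕ => 1 / ((n : ℝ) + 1)) atTop (𝓝 0) :=
        tendsto_one_div_add_atTop_nhds_zero_nat
      have hev : ∀ᶠ n : ℕ in atTop, 1 / ((n : ℝ) + 1) < 2 * r :=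
        htend.eventually_lt_const (by linarith)
      filter_upwards [hev] with n hn
      simp only [Set.mem_preimage, Set.mem_insert_iff, hg n x, euclBall, Set.mem_setOf_eq]
      right
      have hpos : (0 : ℝ) < 1 / ((n : ℝ) + 1) := by positivity
      have : ((x : ℝ) - x) ^ 2 = 0 := by ring
      show (x - x) ^ 2 + (1 / ((n:ℝ) + 1) - r) ^ 2 < r ^ 2
      nlinarith
  · -- closedness of F
    rw [← isOpen_compl_iff, isOpen_iff_forall_mem_open]
    intro p hp
    simp only [Set.mem_compl_iff, Set.mem_setOf_eq, not_and, not_exists] at hp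
    rcases eq_or_lt_of_le p.property with h0 | h0
    · -- boundary point, irrational first coordinate
      refine ⟨insert ⟨(p.val.1, 0), le_refl 0⟩
        { q : Niemytzki | q.val ∈ euclBall (p.val.1, 1) 1 }, ?_, ?_, ?_⟩
      · intro q hq
        simp only [Set.mem_compl_iff, Set.mem_setOf_eq, not_and, not_exists]
        rcases hq with h | h
        · intro _ 
          have h1 : q.val.1 = p.val.1 := congrArg (fun z => z.val.1) h
          rw [h1]
          exact hp h0.symm
        · intro hq2
          exfalso
          simp only [euclBall, Set.mem_setOf_eq] at h
          rw [hq2] at h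
          nlinarith [sq_nonneg (q.val.1 - p.val.1)]
      · exact niem_gen_open (Or.inr ⟨p.val.1, 1, one_pos, rfl⟩)
      · left
        apply Subtype.ext
        exact Prod.ext rfl h0.symm
    · -- interior point
      refine ⟨{ q : Niemytzki | q.val ∈ euclBall (p.val.1, p.val.2) p.val.2 }, ?_, ?_, ?_⟩
      · intro q hq
        simp only [Set.mem_compl_iff, Set.mem_setOf_eq, not_and, not_exists]
        intro hq2
        exfalso
        simp only [euclBall, Set.mem_setOf_eq] at hq
        rw [hq2] at hq
        nlinarith [sq_nonneg (q.val.1 - p.val.1)]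
      · exact niem_gen_open (Or.inl ⟨p.val.1, p.val.2, p.val.2, h0, h0, le_refl _, rfl⟩)
      · simp only [euclBall, Set.mem_setOf_eq]
        nlinarith
  · -- preimage computation
    ext x
    simp [hf x, Set.mem_range, eq_comm]
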